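/- Let N ∈ (1,∞), K ∈ ℝ and a < b be real numbers. Let h ∈ C²((a,b)) with h > 0 on (a,b), and let κ : (a,b) → ℝ be continuous with (log h)''(t) + ((log h)'(t))²/(N−1) ≤ −κ(t) for almost every t ∈ (a,b). Let G ∈ C¹((a,b)) satisfy the Riccati equation G'(t) + G(t)²/(N−1) = −K for all t ∈ (a,b). Then the function ψ := max((log h)' − G, 0) is locally Lipschitz on (a,b) and satisfies, for almost every t ∈ (a,b), the differential inequality ψ'(t) + ψ(t)²/(N−1) + 2·ψ(t)·G(t)/(N−1) ≤ max(K − κ(t), 0). -/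

import Mathlib

open Real MeasureTheory Filter Set
open scoped ENNReal NNReal Topology

/-- `f` is locally Lipschitz on the set `s`. -/
def LocLipschitzOn (f : ℝ → ℝ) (s : Set ℝ) : Prop :=
  ∀ x ∈ s, ∃ C : NNReal, ∃ t ∈ nhdsWithin x s, LipschitzOnWith C f t

/-- Riccati comparison for the mean curvature deficit, smooth case.
If `h ∈ C²((a,b))` is positive and satisfies `(log h)'' + ((log h)')²/(N−1) ≤ −κ` a.e.,
and `G ∈ C¹((a,b))` solves `G' + G²/(N−1) = −K`, then `ψ := max((log h)' − G, 0)` is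
locally Lipschitz and satisfies `ψ' + ψ²/(N−1) + 2ψG/(N−1) ≤ max(K−κ, 0)` a.e. on `(a,b)`. -/
theorem riccati_comparison_deficit
    (N K : ℝ) (hN : 1 < N) (a b : ℝ) (hab : a < b)
    (h κ G : ℝ → ℝ)
    (hh : ContDiffOn ℝ 2 h (Set.Ioo a b))
    (hpos : ∀ t ∈ Set.Ioo a b, 0 < h t)
    (hκ : ContinuousOn κ (Set.Ioo a b))
    (hineq : ∀ᵐ t : ℝ ∂volume, t ∈ Set.Ioo a b →
      deriv (deriv (fun s => Real.log (h s))) t +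
        (deriv (fun s => Real.log (h s)) t) ^ 2 / (N - 1) ≤ -κ t)
    (hG : ContDiffOn ℝ 1 G (Set.Ioo a b))
    (hRiccati : ∀ t ∈ Set.Ioo a b, deriv G t + G t ^ 2 / (N - 1) = -K) :
    LocLipschitzOn (fun t => max (deriv (fun s => Real.log (h s)) t - G t) 0)
      (Set.Ioo a b) ∧
    ∀ᵐ t : ℝ ∂volume, t ∈ Set.Ioo a b →
      deriv (fun r => max (deriv (fun s => Real.log (h s)) r - G r) 0) t +
          (max (deriv (fun s => Real.log (h s)) t - G t) 0) ^ 2 / (N - 1) +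
          2 * max (deriv (fun s => Real.log (h s)) t - G t) 0 * G t / (N - 1) ≤
        max (K - κ t) 0 := by
  have hNd : (0 : ℝ) < N - 1 := by linarith
  have hopen : IsOpen (Set.Ioo a b) := isOpen_Ioo
  set L : ℝ → ℝ := fun s => Real.log (h s) with hLdef
  have hLcd : ContDiffOn ℝ 2 L (Set.Ioo a b) :=
    hh.log fun x hx => (hpos x hx).ne'
  have hL' : ContDiffOn ℝ 1 (deriv L) (Set.Ioo a b) := by
    have : (1 : WithTop ℕ∞) + 1 ≤ 2 := by norm_num
    exact hLcd.deriv_of_isOpen hopen this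
  set u : ℝ → ℝ := fun x => deriv L x - G x with hudef
  have hu : ContDiffOn ℝ 1 u (Set.Ioo a b) := hL'.sub hG
  set ψ : ℝ → ℝ := fun r => max (u r) 0 with hψdef
  have hψnn : ∀ x, 0 ≤ ψ x := fun x => le_max_right _ _
  constructor
  · intro x hx
    obtain ⟨C, t, ht, hlip⟩ := (hu.contDiffAt (hopen.mem_nhds hx)).exists_lipschitzOnWith
    refine ⟨1 * C, t, mem_nhdsWithin_of_mem_nhds ht, ?_⟩
    exact ((LipschitzWith.id.max_const 0).comp_lipschitzOnWith hlip)
  · filter_upwards [hineq] with t hineqt hmem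
    have hineqt := hineqt hmem
    have hLd : DifferentiableAt ℝ (deriv L) t :=
      (hL'.contDiffAt (hopen.mem_nhds hmem)).differentiableAt one_ne_zero
    have hGd : DifferentiableAt ℝ G t :=
      (hG.contDiffAt (hopen.mem_nhds hmem)).differentiableAt one_ne_zero
    have hucont : ContinuousAt u t :=
      ((hu.contDiffAt (hopen.mem_nhds hmem)).differentiableAt one_ne_zero).continuousAt
    rcases lt_trichotomy (u t) 0 with hlt | heq | hgt
    · -- u t < 0 : ψ vanishes near t
      have hev : ∀ᶠ x in 𝓝 t, u x ∈ Set.Iio 0 :=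
        hucont.eventually_mem (isOpen_Iio.mem_nhds hlt)
      have hψ0 : ψ =ᶠ[𝓝 t] fun _ => (0 : ℝ) :=
        hev.mono fun x hx => max_eq_right hx.le
      have hd0 : deriv ψ t = 0 := by rw [hψ0.deriv_eq, deriv_const]
      have hmax : max (u t) 0 = 0 := max_eq_right hlt.le
      rw [show deriv L t - G t = u t from rfl, hmax, hd0]
      have : (0 : ℝ) ≤ max (K - κ t) 0 := le_max_right _ _
      simpa using this
    · -- u t = 0 : t is a local min of ψ, so deriv ψ t = 0
      have hmin : IsLocalMin ψ t := by
        apply Filter.Eventually.of_forall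
        intro x
        simp only [hψdef]
        rw [heq]
        simpa using hψnn x
      have hd0 : deriv ψ t = 0 := hmin.deriv_eq_zero
      rw [show deriv L t - G t = u t from rfl, heq, hd0]
      have : (0 : ℝ) ≤ max (K - κ t) 0 := le_max_right _ _
      simpa using this
    · -- u t > 0 : ψ = u near t
      have hev : ∀ᶠ x in 𝓝 t, u x ∈ Set.Ioi 0 :=
        hucont.eventually_mem (isOpen_Ioi.mem_nhds hgt)
      have hψu : ψ =ᶠ[𝓝 t] u := hev.mono fun x hx => max_eq_left hx.le
      have hderiv_u : deriv u t = deriv (deriv L) t - deriv G t := deriv_sub hLd hGd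
      have hd : deriv ψ t = deriv (deriv L) t - deriv G t := by
        rw [hψu.deriv_eq, hderiv_u]
      have hmax : max (u t) 0 = u t := max_eq_left hgt.le
      rw [show deriv L t - G t = u t from rfl, hmax, hd]
      have hR := hRiccati t hmem
      have hK : K - κ t ≤ max (K - κ t) 0 := le_max_left _ _
      have halg : u t ^ 2 / (N - 1) + 2 * u t * G t / (N - 1)
          = deriv L t ^ 2 / (N - 1) - G t ^ 2 / (N - 1) := by
        rw [← add_div, ← sub_div]
        congr 1
        simp only [hudef]
        ring
      linarith
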